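/- Let n be a nonempty finite type, let A, B : Matrix n n ℂ be positive semidefinite matrices, let V : Matrix n n ℂ be arbitrary, and let p : ℝ with p > 1. Denote by M^r the r-th power of a positive semidefinite matrix M given by the continuous functional calculus with the function x ↦ x^r on [0,∞). Then Re Tr[(V * B^(p/2) − A^(p/2) * V)* * (V * B^(p/2) − A^(p/2) * V)] ≤ (p²/(4(p−1))) · Re Tr[(V * B − A * V)* * (V * B^(p−1) − A^(p−1) * V)]. -/

import Mathlib

open Matrix MeasureTheory intervalIntegral
open scoped ComplexOrder


lemma CS_aux {r t s : ℝ} (ht : 0 ≤ t) (hts : t ≤ s) (hr : -1 < r) :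
    (∫ x in t..s, x ^ (r / 2)) ^ 2 ≤ (s - t) * ∫ x in t..s, x ^ r := by
  have hr2 : (-1 : ℝ) < r / 2 := by linarith
  set μ := volume.restrict (Set.Ioc t s) with hμ
  have hfin : IsFiniteMeasure μ := by
    constructor
    rw [hμ, Measure.restrict_apply_univ, Real.volume_Ioc]
    exact ENNReal.ofReal_lt_top
  set f : ℝ → ℝ := fun x => x ^ (r / 2) with hf
  have hmeas : AEStronglyMeasurable f μ := by fun_prop
  have hae : ∀ᵐ x ∂μ, x ∈ Set.Ioc t s := ae_restrict_mem measurableSet_Ioc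
  have hf_nonneg : 0 ≤ᵐ[μ] f := by
    filter_upwards [hae] with x hx
    exact Real.rpow_nonneg (le_trans ht hx.1.le) _
  have hsq : (fun x => f x ^ (2:ℝ)) =ᵐ[μ] fun x => x ^ r := by
    filter_upwards [hae] with x hx
    show (x ^ (r/2)) ^ (2:ℝ) = x ^ r
    rw [← Real.rpow_mul (le_trans ht hx.1.le)]
    norm_num
  have hint_r : IntegrableOn (fun x : ℝ => x ^ r) (Set.Ioc t s) :=
    (intervalIntegrable_iff_integrableOn_Ioc_of_le hts).mp (intervalIntegrable_rpow' hr)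
  have hsq_int : Integrable (fun x => f x ^ (2:ℕ)) μ := by
    refine hint_r.congr ?_
    filter_upwards [hsq] with x hx
    rw [← hx]
    norm_num [Real.rpow_natCast]
  have hf2 : MemLp f 2 μ := (memLp_two_iff_integrable_sq hmeas).mpr hsq_int
  have hg2 : MemLp (fun _ : ℝ => (1:ℝ)) 2 μ := memLp_const 1
  have hconj : (2:ℝ).HolderConjugate 2 := by
    rw [Real.holderConjugate_iff_eq_conjExponent (by norm_num)]; norm_num [Real.conjExponent]
  have hCS := integral_mul_le_Lp_mul_Lq_of_nonneg hconj hf_nonneg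
    (Filter.Eventually.of_forall fun _ => zero_le_one)
    (by simpa using hf2) (by simpa using hg2)
  simp only [mul_one, Real.one_rpow] at hCS
  have hI1 : ∫ a, (1:ℝ) ∂μ = s - t := by
    simp [hμ, hts, Real.volume_Ioc, ENNReal.toReal_ofReal (by linarith : (0:ℝ) ≤ s - t)]
  have hJ : ∫ a, f a ^ (2:ℝ) ∂μ = ∫ x in t..s, x ^ r := by
    rw [integral_congr_ae hsq, intervalIntegral.integral_of_le hts]
  rw [hI1, hJ] at hCS
  have hIeq : ∫ a, f a ∂μ = ∫ x in t..s, x ^ (r/2) := by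
    rw [intervalIntegral.integral_of_le hts]
  rw [hIeq] at hCS
  have hInn : 0 ≤ ∫ x in t..s, x ^ (r/2) := by
    rw [← hIeq]; exact integral_nonneg_of_ae hf_nonneg
  have hJnn : 0 ≤ ∫ x in t..s, x ^ r := by
    rw [← hJ]
    refine integral_nonneg_of_ae ?_
    filter_upwards [hae] with x hx
    simpa using Real.rpow_nonneg (Real.rpow_nonneg (le_trans ht hx.1.le) (r/2)) 2
  have h12 : ((∫ x in t..s, x ^ r) ^ ((1:ℝ)/2)) ^ 2 = ∫ x in t..s, x ^ r := by
    rw [← Real.rpow_natCast (_ ^ ((1:ℝ)/2)) 2, ← Real.rpow_mul hJnn]; norm_num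
  have h13 : ((s - t) ^ ((1:ℝ)/2)) ^ 2 = s - t := by
    rw [← Real.rpow_natCast (_ ^ ((1:ℝ)/2)) 2, ← Real.rpow_mul (by linarith)]; norm_num
  nlinarith [Real.rpow_nonneg hJnn ((1:ℝ)/2), Real.rpow_nonneg (show (0:ℝ) ≤ s - t by linarith) ((1:ℝ)/2), sq_nonneg ((∫ x in t..s, x ^ r) ^ ((1:ℝ)/2) * (s - t) ^ ((1:ℝ)/2))]

lemma scalar_aux_le {p s t : ℝ} (hp : 1 < p) (ht : 0 ≤ t) (hts : t ≤ s) :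
    (s ^ (p / 2) - t ^ (p / 2)) ^ 2 ≤
      p ^ 2 / (4 * (p - 1)) * ((s - t) * (s ^ (p - 1) - t ^ (p - 1))) := by
  have hr1 : (-1 : ℝ) < (p - 2) / 2 := by linarith
  have hr2 : (-1 : ℝ) < p - 2 := by linarith
  have h1 : ∫ x in t..s, x ^ ((p - 2) / 2) = (s ^ (p / 2) - t ^ (p / 2)) / (p / 2) := by
    rw [integral_rpow (Or.inl hr1)]; ring_nf
  have h2 : ∫ x in t..s, x ^ (p - 2) = (s ^ (p - 1) - t ^ (p - 1)) / (p - 1) := by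
    rw [integral_rpow (Or.inl hr2)]; ring_nf
  have hCS := CS_aux ht hts hr2
  rw [h1, h2] at hCS
  have hp0 : (0:ℝ) < p := by linarith
  have hp1 : (0:ℝ) < p - 1 := by linarith
  rw [div_pow] at hCS
  rw [div_le_iff₀ (by positivity)] at hCS
  refine hCS.trans_eq ?_
  field_simp
  ring


lemma trace_re_eq {n : Type*} [Fintype n] [DecidableEq n]
    {A B : Matrix n n ℂ} (hA : A.IsHermitian) (hB : B.IsHermitian)
    (V : Matrix n n ℂ) (f g : ℝ → ℝ) :
    (Matrix.trace ((V * hB.cfc f - hA.cfc f * V)ᴴ * (V * hB.cfc g - hA.cfc g * V))).re =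
      ∑ i, ∑ j, Complex.normSq
          ((star (hA.eigenvectorUnitary : Matrix n n ℂ) * V * (hB.eigenvectorUnitary : Matrix n n ℂ)) i j) *
        ((f (hB.eigenvalues j) - f (hA.eigenvalues i)) *
          (g (hB.eigenvalues j) - g (hA.eigenvalues i))) := by
  set U : Matrix n n ℂ := (hA.eigenvectorUnitary : Matrix n n ℂ) with hUdef
  set W : Matrix n n ℂ := (hB.eigenvectorUnitary : Matrix n n ℂ) with hWdef
  have hU1 : U * star U = 1 := Matrix.mem_unitaryGroup_iff.mp hA.eigenvectorUnitary.2
  have hU2 : star U * U = 1 := Matrix.mem_unitaryGroup_iff'.mp hA.eigenvectorUnitary.2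
  have hW1 : W * star W = 1 := Matrix.mem_unitaryGroup_iff.mp hB.eigenvectorUnitary.2
  have hW2 : star W * W = 1 := Matrix.mem_unitaryGroup_iff'.mp hB.eigenvectorUnitary.2
  set X : Matrix n n ℂ := star U * V * W with hXdef
  set a := hA.eigenvalues with hadef
  set b := hB.eigenvalues with hbdef
  have key : ∀ h : ℝ → ℝ,
      V * hB.cfc h - hA.cfc h * V =
        U * (X * diagonal (Complex.ofReal ∘ h ∘ b) -
          diagonal (Complex.ofReal ∘ h ∘ a) * X) * star W := by
    intro h
    rw [Matrix.mul_sub, Matrix.sub_mul]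
    congr 1
    · show _ = U * (X * diagonal (Complex.ofReal ∘ h ∘ b)) * star W
      rw [Matrix.IsHermitian.cfc, Unitary.conjStarAlgAut_apply]
      simp only [hXdef, ← Matrix.mul_assoc, Unitary.coe_star]
      rw [hU1, Matrix.one_mul]
      rfl
    · show _ = U * (diagonal (Complex.ofReal ∘ h ∘ a) * X) * star W
      rw [Matrix.IsHermitian.cfc, Unitary.conjStarAlgAut_apply]
      simp only [hXdef, ← Matrix.mul_assoc, Unitary.coe_star]
      rw [Matrix.mul_assoc _ W (star W), hW1, Matrix.mul_one]
      rfl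
  rw [key f, key g]
  set P := X * diagonal (Complex.ofReal ∘ f ∘ b) - diagonal (Complex.ofReal ∘ f ∘ a) * X with hP
  set Q := X * diagonal (Complex.ofReal ∘ g ∘ b) - diagonal (Complex.ofReal ∘ g ∘ a) * X with hQ
  have htr : Matrix.trace ((U * P * star W)ᴴ * (U * Q * star W)) = Matrix.trace (Pᴴ * Q) := by
    rw [Matrix.conjTranspose_mul, Matrix.conjTranspose_mul]
    rw [show (star W)ᴴ = W from by simp [Matrix.star_eq_conjTranspose]]
    rw [show Uᴴ = star U from rfl]
    simp only [← Matrix.mul_assoc]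
    rw [Matrix.mul_assoc (W * Pᴴ) (star U) U, hU2, Matrix.mul_one]
    rw [Matrix.trace_mul_comm]
    simp only [← Matrix.mul_assoc]
    rw [hW2, Matrix.one_mul]
  rw [htr]
  have hPe : ∀ k i, P k i = X k i * ((f (b i) - f (a k) : ℝ) : ℂ) := by
    intro k i
    simp [hP, Matrix.mul_diagonal, Matrix.diagonal_mul, Matrix.sub_apply, Function.comp]
    ring
  have hQe : ∀ k i, Q k i = X k i * ((g (b i) - g (a k) : ℝ) : ℂ) := by
    intro k i
    simp [hQ, Matrix.mul_diagonal, Matrix.diagonal_mul, Matrix.sub_apply, Function.comp]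
    ring
  rw [Matrix.trace]
  simp only [Matrix.diag_apply, Matrix.mul_apply, Matrix.conjTranspose_apply]
  rw [Complex.re_sum]
  rw [Finset.sum_comm]
  refine Finset.sum_congr rfl fun k _ => ?_
  rw [Complex.re_sum]
  refine Finset.sum_congr rfl fun i _ => ?_
  rw [hPe i k, hQe i k]
  have hz : (starRingEnd ℂ) (X i k) * X i k = (Complex.normSq (X i k) : ℂ) := by
    rw [mul_comm, Complex.mul_conj]
  have hterm : star (X i k * ((f (b k) - f (a i) : ℝ) : ℂ)) *
        (X i k * ((g (b k) - g (a i) : ℝ) : ℂ)) =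
      ((Complex.normSq (X i k) : ℂ)) * (((f (b k) - f (a i)) * (g (b k) - g (a i)) : ℝ) : ℂ) := by
    simp only [star_mul', Complex.star_def, Complex.conj_ofReal]
    rw [← hz]
    push_cast
    ring
  rw [hterm, ← Complex.ofReal_mul, Complex.ofReal_re]

lemma scalar_key {p : ℝ} (hp : 1 < p) {s t : ℝ} (hs : 0 ≤ s) (ht : 0 ≤ t) :
    (s ^ (p / 2) - t ^ (p / 2)) ^ 2 ≤
      p ^ 2 / (4 * (p - 1)) * ((s - t) * (s ^ (p - 1) - t ^ (p - 1))) := by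
  rcases le_total t s with h | h
  · exact scalar_aux_le hp ht h
  · nlinarith [scalar_aux_le hp hs h]

/-- real power of a (positive semidefinite) matrix via the continuous functional
calculus with the function `x ↦ x ^ r` on `[0, ∞)` -/
noncomputable def mrpow {n : Type*} [Fintype n] [DecidableEq n]
    (M : Matrix n n ℂ) (r : ℝ) : Matrix n n ℂ :=
  cfc (fun x : ℝ => x ^ r) M

/-- **Core trace inequality of Theorem 3.3** (strong `L_p`-regularity):
`Tr[|V B^{p/2} − A^{p/2} V|²] ≤ (p²/(4(p−1))) Re Tr[(VB − AV)* (V B^{p−1} − A^{p−1} V)]`. -/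
theorem trace_power_inequality
    {n : Type*} [Fintype n] [DecidableEq n] [Nonempty n]
    (A B : Matrix n n ℂ) (hA : A.PosSemidef) (hB : B.PosSemidef)
    (V : Matrix n n ℂ) (p : ℝ) (hp : 1 < p) :
    (Matrix.trace ((V * mrpow B (p / 2) - mrpow A (p / 2) * V)ᴴ *
        (V * mrpow B (p / 2) - mrpow A (p / 2) * V))).re ≤
      (p ^ 2 / (4 * (p - 1))) *
        (Matrix.trace ((V * B - A * V)ᴴ *
          (V * mrpow B (p - 1) - mrpow A (p - 1) * V))).re := by
  have hA' : A.IsHermitian := hA.1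
  have hB' : B.IsHermitian := hB.1
  have hAsa : IsSelfAdjoint A := hA'
  have hBsa : IsSelfAdjoint B := hB'
  have hmr : ∀ (M : Matrix n n ℂ) (hM : M.IsHermitian) (r : ℝ),
      mrpow M r = hM.cfc (fun x : ℝ => x ^ r) := fun M hM r => by
    rw [mrpow, hM.cfc_eq]
  have hidA : A = hA'.cfc (fun x : ℝ => x) := by
    conv_lhs => rw [← cfc_id' ℝ A]
    rw [hA'.cfc_eq]
  have hidB : B = hB'.cfc (fun x : ℝ => x) := by
    conv_lhs => rw [← cfc_id' ℝ B]
    rw [hB'.cfc_eq]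
  rw [hmr B hB' (p / 2), hmr A hA' (p / 2), hmr B hB' (p - 1), hmr A hA' (p - 1)]
  have hVBAV : V * B - A * V =
      V * hB'.cfc (fun x : ℝ => x) - hA'.cfc (fun x : ℝ => x) * V := by
    rw [← hidA, ← hidB]
  rw [hVBAV]
  rw [trace_re_eq hA' hB' V (fun x => x ^ (p / 2)) (fun x => x ^ (p / 2)),
    trace_re_eq hA' hB' V (fun x => x) (fun x => x ^ (p - 1))]
  rw [Finset.mul_sum]
  refine Finset.sum_le_sum fun i _ => ?_
  rw [Finset.mul_sum]
  refine Finset.sum_le_sum fun j _ => ?_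
  set c := p ^ 2 / (4 * (p - 1))
  set s := hB'.eigenvalues j
  set t := hA'.eigenvalues i
  have hs : 0 ≤ s := hB.eigenvalues_nonneg j
  have ht : 0 ≤ t := hA.eigenvalues_nonneg i
  have hkey : (s ^ (p / 2) - t ^ (p / 2)) ^ 2 ≤
      c * ((s - t) * (s ^ (p - 1) - t ^ (p - 1))) := scalar_key hp hs ht
  set m := Complex.normSq ((star (hA'.eigenvectorUnitary : Matrix n n ℂ) * V *
    (hB'.eigenvectorUnitary : Matrix n n ℂ)) i j)
  have hm : 0 ≤ m := Complex.normSq_nonneg _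
  calc m * ((s ^ (p / 2) - t ^ (p / 2)) * (s ^ (p / 2) - t ^ (p / 2)))
      = m * (s ^ (p / 2) - t ^ (p / 2)) ^ 2 := by ring
    _ ≤ m * (c * ((s - t) * (s ^ (p - 1) - t ^ (p - 1)))) :=
        mul_le_mul_of_nonneg_left hkey hm
    _ = c * (m * ((s - t) * (s ^ (p - 1) - t ^ (p - 1)))) := by ring
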